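/- Suppose 4 | k, 2k-1 is an odd prime power, and k = ℓ^2 is a perfect square (ℓ a positive even integer). Then the only positive integer solution of x^2 + (2k-1)^y = k^z is (x, y, z) = (k-1, 1, 2). -/

import Mathlib

theorem stmt_3 (k ℓ : ℕ) (hℓ : 0 < ℓ) (hℓe : Even ℓ) (hk : k = ℓ ^ 2)
    (h4 : 4 ∣ k)
    (hpp : ∃ p m : ℕ, p.Prime ∧ Odd p ∧ 0 < m ∧ 2 * k - 1 = p ^ m)
    (x y z : ℕ) (hx : 0 < x) (hy : 0 < y) (hz : 0 < z)
    (heq : x ^ 2 + (2 * k - 1) ^ y = k ^ z) :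
    x = k - 1 ∧ y = 1 ∧ z = 2 := by
  obtain ⟨p, m, hp, hpodd, hm, hpm⟩ := hpp
  obtain ⟨t, ht⟩ := hℓe
  have ht1 : 1 ≤ t := by omega
  have hL2 : 2 ≤ ℓ := by omega
  have hk4 : 4 ≤ k := by subst hk; nlinarith
  set A := 2 * k - 1 with hAdef
  have hA1 : A + 1 = 2 * k := by omega
  have hA2 : 2 ≤ A := by omega
  have hAodd : Odd A := by rw [Nat.odd_iff]; omega
  -- p does not divide ℓ
  have hpnl : ¬ p ∣ ℓ := by
    intro hdvd
    have h1 : p ∣ k := by rw [hk]; exact dvd_pow hdvd (by norm_num)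
    have h2 : p ∣ 2 * k := Dvd.dvd.mul_left h1 2
    have h3 : p ∣ p ^ m := dvd_pow_self p hm.ne'
    rw [← hpm] at h3
    have h4 : p ∣ 1 := by
      have := Nat.dvd_sub h2 h3
      simpa [show 2 * k - A = 1 by omega] using this
    exact hp.one_lt.ne' (Nat.dvd_one.mp h4)
  -- x < ℓ^z
  have hkz : k ^ z = (ℓ ^ z) ^ 2 := by rw [hk]; ring
  have hxlt : x < ℓ ^ z := by
    have h1 : x ^ 2 < (ℓ ^ z) ^ 2 := by
      have : 0 < A ^ y := Nat.pow_pos (by omega)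
      omega
    exact lt_of_pow_lt_pow_left₀ 2 (Nat.zero_le _) h1
  -- factorization
  have hfac : (ℓ ^ z + x) * (ℓ ^ z - x) = A ^ y := by
    rw [← Nat.sq_sub_sq]; omega
  have hfac' : (ℓ ^ z + x) * (ℓ ^ z - x) = p ^ (m * y) := by
    rw [hfac, hpm, ← pow_mul]
  -- the small factor is 1
  have hb2 : 2 ≤ ℓ ^ z + x := by
    have h1 : 1 ≤ ℓ ^ z := Nat.one_le_pow _ _ hℓ
    omega
  obtain ⟨j, hj, hjb⟩ := (Nat.dvd_prime_pow hp).mp ⟨_, hfac'.symm⟩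
  obtain ⟨i, hi, hia⟩ := (Nat.dvd_prime_pow hp).mp
    (Dvd.intro _ (by rw [mul_comm]; exact hfac') : (ℓ ^ z - x) ∣ p ^ (m * y))
  have hione : ℓ ^ z - x = 1 := by
    rcases Nat.eq_zero_or_pos i with h0 | hpos
    · rw [hia, h0, pow_zero]
    · exfalso
      have hj1 : 1 ≤ j := by
        by_contra h
        have : j = 0 := by omega
        rw [this, pow_zero] at hjb; omega
      have hpa : p ∣ ℓ ^ z - x := hia ▸ dvd_pow_self p hpos.ne'
      have hpb : p ∣ ℓ ^ z + x := hjb ▸ dvd_pow_self p (by omega)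
      have hsum : p ∣ 2 * ℓ ^ z := by
        have := Nat.dvd_add hpb hpa
        simpa [show ℓ ^ z + x + (ℓ ^ z - x) = 2 * ℓ ^ z by omega] using this
      have hne2 : p ≠ 2 := by
        rintro rfl
        rw [Nat.odd_iff] at hpodd; omega
      have : p ∣ ℓ ^ z := ((Nat.Prime.dvd_mul hp).mp hsum).resolve_left
        (fun h => hne2 ((Nat.prime_dvd_prime_iff_eq hp Nat.prime_two).mp h))
      exact hpnl (hp.dvd_of_dvd_pow this)
  -- key equation
  have hxv : x + 1 = ℓ ^ z := by omega
  have hkey : A ^ y + 1 = 2 * ℓ ^ z := by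
    have hb : ℓ ^ z + x = A ^ y := by
      rw [← hfac, hione, mul_one]
    omega
  -- z ≥ 2
  have hz2 : 2 ≤ z := by
    have h1 : A ≤ A ^ y := Nat.le_self_pow hy.ne' _
    have h2 : ℓ ^ 2 ≤ ℓ ^ z := by omega
    exact (Nat.pow_le_pow_iff_right hL2).mp h2
  obtain ⟨w, hw⟩ : ∃ w, z = 2 + w := ⟨z - 2, by omega⟩
  -- y is odd
  have hkc : (k : ZMod 4) = 0 := by
    obtain ⟨c', hc'⟩ := h4
    rw [hc']; push_cast; simp [show (4 : ZMod 4) = 0 by decide]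
  have hAc : ((A : ℕ) : ZMod 4) = 2 * (k : ZMod 4) - 1 := by
    have h := congrArg (Nat.cast : ℕ → ZMod 4) hA1
    push_cast at h
    linear_combination h
  have hlc : ((ℓ : ZMod 4)) ^ z = 0 := by
    have h2 : ((ℓ : ZMod 4)) ^ 2 = (k : ZMod 4) := by
      rw [hk]; push_cast; ring
    rw [hw, pow_add, h2, hkc, zero_mul]
  have hyodd : Odd y := by
    rcases Nat.even_or_odd y with he | ho
    · exfalso
      obtain ⟨c, hc⟩ := he
      have hcast : ((A : ℕ) : ZMod 4) ^ y + 1 = 2 * ((ℓ : ZMod 4)) ^ z := by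
        exact_mod_cast congrArg (Nat.cast : ℕ → ZMod 4) hkey
      rw [hAc, hkc, hlc, hc, ← two_mul, pow_mul] at hcast
      have he2 : ((2 * 0 - 1 : ZMod 4)) ^ 2 = 1 := by decide
      rw [he2, one_pow] at hcast
      exact absurd hcast (by decide)
    · exact ho
  -- geometric sum argument in ℤ
  set B : ℤ := ((A : ℕ) : ℤ) with hB
  have hBk : B + 1 = 2 * (k : ℤ) := by rw [hB]; exact_mod_cast hA1
  have hkZ : (k : ℤ) = (ℓ : ℤ) ^ 2 := by exact_mod_cast hk
  set S : ℤ := ∑ i ∈ Finset.range y, (-B) ^ i with hS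
  have hgeom : S * (B + 1) = B ^ y + 1 := by
    have h := geom_sum_mul (-B) y
    rw [← hS] at h
    have hneg : (-B) ^ y = -(B ^ y) := Odd.neg_pow hyodd B
    rw [hneg] at h
    linear_combination -h
  have hkeyZ : B ^ y + 1 = 2 * (ℓ : ℤ) ^ z := by rw [hB]; exact_mod_cast hkey
  have hSeq : S * ((ℓ : ℤ) ^ 2) = (ℓ : ℤ) ^ z := by
    have h1 : S * (2 * (ℓ : ℤ) ^ 2) = 2 * (ℓ : ℤ) ^ z := by
      rw [← hkeyZ, ← hgeom, hBk, hkZ]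
    linarith
  have hSw : S = (ℓ : ℤ) ^ w := by
    have hlz : ((ℓ : ℤ)) ^ 2 ≠ 0 := by positivity
    have h : S * ((ℓ : ℤ) ^ 2) = (ℓ : ℤ) ^ w * ((ℓ : ℤ) ^ 2) := by
      rw [hSeq, hw]; ring
    exact mul_right_cancel₀ hlz h
  -- S is odd
  have hA2' : ((A : ℕ) : ZMod 2) = 1 := by
    obtain ⟨r, hr⟩ := hAodd
    rw [hr]; push_cast; simp [show ((2 : ZMod 2)) = 0 from by decide]
  have hSodd : ((S : ℤ) : ZMod 2) = 1 := by
    rw [hS, hB]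
    push_cast
    rw [hA2']
    rw [show (-(1 : ZMod 2)) = 1 from by decide]
    simp only [one_pow, Finset.sum_const, Finset.card_range, nsmul_eq_mul, mul_one]
    obtain ⟨c, hc⟩ := hyodd
    rw [hc]; push_cast; simp [show ((2 : ZMod 2)) = 0 from by decide]
  have hw0 : w = 0 := by
    by_contra hne
    have hl0 : ((ℓ : ZMod 2)) = 0 := by
      rw [ht]; push_cast
      rw [show ((t : ZMod 2)) + t = 2 * t from by ring,
        show ((2 : ZMod 2)) = 0 from by decide, zero_mul]
    have h := congrArg (Int.cast : ℤ → ZMod 2) hSw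
    push_cast at h
    rw [hSodd, hl0, zero_pow hne] at h
    exact one_ne_zero h
  have hzval : z = 2 := by omega
  -- y = 1
  have hyval : y = 1 := by
    have h1 : A ^ y = A ^ 1 := by
      rw [pow_one]
      have h2 : 2 * ℓ ^ z = 2 * k := by rw [hzval, hk]
      omega
    exact Nat.pow_right_injective hA2 h1
  refine ⟨?_, hyval, hzval⟩
  have hfin : ℓ ^ z = k := by rw [hzval, hk]
  omega
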